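/- Exchange of substitutions: let 𝐮 ∈ Sp γ₁ γ₂ and 𝐭 ∈ Sp γ₁.γ₂ γ₃. For every expression e ∈ Expr γ₁.γ₂.γ₃.γ₄ we have e[𝐭/γ₃][𝐮/γ₂] = e[𝐮/γ₂][𝐭[𝐮/γ₂]/γ₃]. -/
import Mathlib


set_option autoImplicit true

namespace CompLF

/-! ## Raw syntax: scopes, pre-signatures, terms and spines -/

/-! Scopes `γ`: lists of entries `x :: δ → s` (nameless, de Bruijn). -/
inductive Scope : Type
  | nil : Scope
  | snoc : Scope → Scope → ℕ → Scope

def Scope.len : Scope → ℕ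
  | .nil => 0
  | .snoc γ _ _ => γ.len + 1

def Scope.append : Scope → Scope → Scope
  | γ, .nil => γ
  | γ, .snoc δ a s => .snoc (γ.append δ) a s

/-- Lookup in a scope: de Bruijn index `0` is the last entry. -/
inductive ScopeAt : Scope → ℕ → Scope → ℕ → Prop
  | here : ScopeAt (.snoc γ δ s) 0 δ s
  | there : ScopeAt γ n δ s → ScopeAt (.snoc γ δ' s') (n+1) δ s

/-- Entries of a pre-signature: `c :: δ → s` (term-level, `out = some s`) or
`c :: δ → □` (type-level, `out = none`). -/
structure PEntry : Type where
  c : ℕ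
  δ : Scope
  out : Option ℕ

abbrev PreSig := List PEntry

/-! Canonical terms and spines (raw, de Bruijn): a term is a head (variable or
constant) applied to a spine; a spine element `x⃗.t` binds `n` variables. -/
mutual
inductive Tm : Type
  | head : (ℕ ⊕ ℕ) → Sp → Tm
inductive Sp : Type
  | nil : Sp
  | snoc : Sp → ℕ → Tm → Sp
end

def Sp.len : Sp → ℕ
  | .nil => 0
  | .snoc ts _ _ => ts.len + 1

def Sp.append : Sp → Sp → Sp
  | a, .nil => a
  | a, .snoc b n t => .snoc (a.append b) n t

/-! Shifting of de Bruijn indices `≥ k` by `d`. -/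
mutual
def shiftTm (d k : ℕ) : Tm → Tm
  | .head (.inl x) sp => .head (.inl (if x < k then x else x + d)) (shiftSp d k sp)
  | .head (.inr c) sp => .head (.inr c) (shiftSp d k sp)
def shiftSp (d k : ℕ) : Sp → Sp
  | .nil => .nil
  | .snoc ts n t => .snoc (shiftSp d k ts) n (shiftTm d (k + n) t)
end

/-! Intrinsic scoping/sorting of terms and spines over a pre-signature. -/
mutual
inductive WfTm (ς : PreSig) : Scope → Tm → ℕ → Prop
  | var : ScopeAt γ x δ s → WfSp ς γ ts δ → WfTm ς γ (.head (.inl x) ts) s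
  | const : (⟨c, δ, some s⟩ : PEntry) ∈ ς → WfSp ς γ ts δ →
      WfTm ς γ (.head (.inr c) ts) s
inductive WfSp (ς : PreSig) : Scope → Sp → Scope → Prop
  | nil : WfSp ς γ .nil .nil
  | snoc : WfSp ς γ ts δ → WfTm ς (γ.append γ') t s →
      WfSp ς γ (.snoc ts γ'.len t) (.snoc δ γ' s)
end

/-! Lookup of an argument in a spine (index `0` = last element), returning its
number of bound variables and its body. -/
inductive SpAt : Sp → ℕ → ℕ → Tm → Prop
  | here : SpAt (.snoc ts n t) 0 n t
  | there : SpAt ts j n t → SpAt (.snoc ts n' t') (j+1) n t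

/-! ## Hereditary substitution -/

/-! Hereditary substitution `e[𝐮/γ₂]` of a spine `u` for the `m` variables of a
scope segment located under `k` binders; variables above the segment are
shifted down by `m`.  `SubTm k m u t t'` means `t' = t[u]`. -/
mutual
inductive SubTm : ℕ → ℕ → Sp → Tm → Tm → Prop
  | low : x < k → SubSp k m u sp sp' →
      SubTm k m u (.head (.inl x) sp) (.head (.inl x) sp')
  | high : k + m ≤ x → SubSp k m u sp sp' →
      SubTm k m u (.head (.inl x) sp) (.head (.inl (x - m)) sp')
  | const : SubSp k m u sp sp' →
      SubTm k m u (.head (.inr c) sp) (.head (.inr c) sp')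
  | mid : k ≤ x → x < k + m → SpAt u (x - k) n t → SubSp k m u sp sp' →
      SubTm 0 n sp' (shiftTm k n t) r →
      SubTm k m u (.head (.inl x) sp) r
inductive SubSp : ℕ → ℕ → Sp → Sp → Sp → Prop
  | nil : SubSp k m u .nil .nil
  | snoc : SubSp k m u ts ts' → SubTm (k + n) m u t t' →
      SubSp k m u (.snoc ts n t) (.snoc ts' n t')
end

/-! ## Types and contexts -/

/-! Types `c(𝐭)` with `c` a type-level constant. -/
structure Ty : Type where
  c : ℕ
  sp : Sp

/-- Contexts: lists of entries `x : Δ → T`. -/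
inductive Ctx : Type
  | nil : Ctx
  | snoc : Ctx → Ctx → Ty → Ctx

/-- Number of entries of a context (= length of its erased scope). -/
def Ctx.size : Ctx → ℕ
  | .nil => 0
  | .snoc Γ _ _ => Γ.size + 1

def Ctx.append : Ctx → Ctx → Ctx
  | Γ, .nil => Γ
  | Γ, .snoc Δ A T => .snoc (Γ.append Δ) A T

/-- Erasure of a type into a sort, via a fixed injection `csort` from
(type-level) constants to sorts. -/
def eraseTy (csort : ℕ → ℕ) (T : Ty) : ℕ := csort T.c

/-- Erasure of a context into a scope. -/
def eraseCtx (csort : ℕ → ℕ) : Ctx → Scope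
  | .nil => .nil
  | .snoc Γ Δ T => .snoc (eraseCtx csort Γ) (eraseCtx csort Δ) (csort T.c)

def shiftTy (d k : ℕ) (T : Ty) : Ty := ⟨T.c, shiftSp d k T.sp⟩

def shiftCtx (d : ℕ) : ℕ → Ctx → Ctx
  | _, .nil => .nil
  | k, .snoc Γ Δ T =>
      .snoc (shiftCtx d k Γ) (shiftCtx d (k + Γ.size) Δ)
        (shiftTy d (k + Γ.size + Δ.size) T)

/-- Substitution on types. -/
inductive SubTy (k m : ℕ) (u : Sp) : Ty → Ty → Prop
  | mk : SubSp k m u sp sp' → SubTy k m u ⟨c, sp⟩ ⟨c, sp'⟩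

/-- Substitution on contexts. -/
inductive SubCtx : ℕ → ℕ → Sp → Ctx → Ctx → Prop
  | nil : SubCtx k m u .nil .nil
  | snoc : SubCtx k m u Γ Γ' → SubCtx (k + Γ.size) m u Δ Δ' →
      SubTy (k + Γ.size + Δ.size) m u T T' →
      SubCtx k m u (.snoc Γ Δ T) (.snoc Γ' Δ' T')

/-- Lookup in a context. -/
inductive CtxAt : Ctx → ℕ → Ctx → Ty → Prop
  | here : CtxAt (.snoc Γ Δ T) 0 Δ T
  | there : CtxAt Γ n Δ T → CtxAt (.snoc Γ Δ' T') (n+1) Δ T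

/-- The identity spine `id_γ`, η-expanding every variable of `γ`. -/
def idSpAux : Scope → ℕ → Sp
  | .nil, _ => .nil
  | .snoc γ δ _, i =>
      .snoc (idSpAux γ (i+1)) δ.len (.head (.inl (δ.len + i)) (idSpAux δ 0))

def idSp (γ : Scope) : Sp := idSpAux γ 0

/-! ## Rewriting -/

/-- A rewrite rule `γ ⊩ l ↦ r :: s`. -/
structure Rule : Type where
  γ : Scope
  lhs : Tm
  rhs : Tm
  s : ℕ

/-! The rewriting relation generated by a rewrite system `R`: root steps by
rule instances, closed under congruence. -/
mutual
inductive RedTm (R : Set Rule) : Tm → Tm → Prop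
  | root : r ∈ R → SubTm 0 r.γ.len v r.lhs t → SubTm 0 r.γ.len v r.rhs t' →
      RedTm R t t'
  | congr : RedSp R sp sp' → RedTm R (.head h sp) (.head h sp')
inductive RedSp (R : Set Rule) : Sp → Sp → Prop
  | here : RedTm R t t' → RedSp R (.snoc ts n t) (.snoc ts n t')
  | there : RedSp R ts ts' → RedSp R (.snoc ts n t) (.snoc ts' n t)
end

inductive RedTy (R : Set Rule) : Ty → Ty → Prop
  | mk : RedSp R sp sp' → RedTy R ⟨c, sp⟩ ⟨c, sp'⟩

inductive RedCtx (R : Set Rule) : Ctx → Ctx → Prop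
  | head : RedCtx R Γ Γ' → RedCtx R (.snoc Γ Δ T) (.snoc Γ' Δ T)
  | mid : RedCtx R Δ Δ' → RedCtx R (.snoc Γ Δ T) (.snoc Γ Δ' T)
  | last : RedTy R T T' → RedCtx R (.snoc Γ Δ T) (.snoc Γ Δ T')

/-! Conversion (definitional equality). -/
def ConvTm (R : Set Rule) : Tm → Tm → Prop := Relation.EqvGen (RedTm R)
def ConvSp (R : Set Rule) : Sp → Sp → Prop := Relation.EqvGen (RedSp R)
def ConvTy (R : Set Rule) : Ty → Ty → Prop := Relation.EqvGen (RedTy R)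
def ConvCtx (R : Set Rule) : Ctx → Ctx → Prop := Relation.EqvGen (RedCtx R)

/-- Strong normalization: no infinite rewrite sequence. -/
def SNTm (R : Set Rule) (t : Tm) : Prop := Acc (fun a b => RedTm R b a) t
def SNSp (R : Set Rule) (ts : Sp) : Prop := Acc (fun a b => RedSp R b a) ts
def SNTy (R : Set Rule) (T : Ty) : Prop := SNSp R T.sp

/-- Confluence of a rewrite system. -/
def Confluent (R : Set Rule) : Prop :=
  ∀ a b c, Relation.ReflTransGen (RedTm R) a b → Relation.ReflTransGen (RedTm R) a c →
    ∃ d, Relation.ReflTransGen (RedTm R) b d ∧ Relation.ReflTransGen (RedTm R) c d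

/-- A reduction strategy for `R`: a functional sub-relation of `→*` with the
same normal forms. -/
def GoodStrategy (R : Set Rule) (S : Tm → Tm → Prop) : Prop :=
  (∀ a b, S a b → Relation.ReflTransGen (RedTm R) a b) ∧
  (∀ a, (∀ b, ¬ S a b) ↔ (∀ b, ¬ RedTm R a b)) ∧
  (∀ a b c, S a b → S a c → b = c)

/-! ## Occurrences of constants, H₁ and H₂ -/

mutual
inductive ConstInTm : ℕ → Tm → Prop
  | head : ConstInTm c (.head (.inr c) sp)
  | arg : ConstInSp c sp → ConstInTm c (.head h sp)
inductive ConstInSp : ℕ → Sp → Prop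
  | here : ConstInTm c t → ConstInSp c (.snoc ts n t)
  | there : ConstInSp c ts → ConstInSp c (.snoc ts n t)
end

def ConstInTy (c : ℕ) (T : Ty) : Prop := c = T.c ∨ ConstInSp c T.sp

/-- H₁: no constant occurring in the expression is the head of a rewrite rule. -/
def H1Tm (R : Set Rule) (t : Tm) : Prop :=
  ∀ c, ConstInTm c t → ∀ r ∈ R, ∀ sp, r.lhs ≠ Tm.head (Sum.inr c) sp
def H1Sp (R : Set Rule) (ts : Sp) : Prop :=
  ∀ c, ConstInSp c ts → ∀ r ∈ R, ∀ sp, r.lhs ≠ Tm.head (Sum.inr c) sp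
def H1Ty (R : Set Rule) (T : Ty) : Prop :=
  ∀ c, ConstInTy c T → ∀ r ∈ R, ∀ sp, r.lhs ≠ Tm.head (Sum.inr c) sp

/-! ## Signatures -/

/-- Entries of a signature: `c : Δ_ν → T` (`out = some T`) or `c : Δ_ν → □`
(`out = none`); `ν` is the erasure assignment (`true` = erased `•`). -/
structure SEntry : Type where
  c : ℕ
  Δ : Ctx
  ν : List Bool
  out : Option Ty

abbrev Sig := List SEntry

/-- ν-erasure of a context into a scope, dropping erased entries (the head of
`ν` corresponds to the last entry of the context). -/
def nuErase (csort : ℕ → ℕ) : Ctx → List Bool → Scope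
  | .nil, _ => .nil
  | .snoc _ _ _, [] => .nil
  | .snoc Γ Δ T, b :: ν =>
      if b then nuErase csort Γ ν
      else .snoc (nuErase csort Γ ν) (eraseCtx csort Δ) (csort T.c)

/-- Action of an erasure assignment on a spine, dropping erased arguments. -/
def nuAct : List Bool → Sp → Sp
  | _, .nil => .nil
  | [], .snoc _ _ _ => .nil
  | b :: ν, .snoc ts n t =>
      if b then nuAct ν ts else .snoc (nuAct ν ts) n t

def eraseSEntry (csort : ℕ → ℕ) (e : SEntry) : PEntry :=
  ⟨e.c, nuErase csort e.Δ e.ν, e.out.map (eraseTy csort)⟩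

/-- Erasure of a signature into a pre-signature. -/
def eraseSig (csort : ℕ → ℕ) (Sg : Sig) : PreSig := Sg.map (eraseSEntry csort)

/-- H₂: every constant occurring in the expression has no erased arguments. -/
def NoErasedTm (Sg : Sig) (t : Tm) : Prop :=
  ∀ c, ConstInTm c t → ∀ e ∈ Sg, e.c = c → ∀ b ∈ e.ν, b = false
def NoErasedSp (Sg : Sig) (ts : Sp) : Prop :=
  ∀ c, ConstInSp c ts → ∀ e ∈ Sg, e.c = c → ∀ b ∈ e.ν, b = false
def NoErasedTy (Sg : Sig) (T : Ty) : Prop :=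
  ∀ c, ConstInTy c T → ∀ e ∈ Sg, e.c = c → ∀ b ∈ e.ν, b = false

/-! ## Typing -/

mutual
/-- `Γ ⊢` -/
inductive WfC (Sg : Sig) (R : Set Rule) (csort : ℕ → ℕ) : Ctx → Prop
  | nil : WfC Sg R csort .nil
  | snoc : WfTy Sg R csort (Γ.append Δ) T → WfC Sg R csort (.snoc Γ Δ T)
/-- `Γ ⊢ T` -/
inductive WfTy (Sg : Sig) (R : Set Rule) (csort : ℕ → ℕ) : Ctx → Ty → Prop
  | mk : (⟨c, Δ, ν, none⟩ : SEntry) ∈ Sg → WfSpJ Sg R csort Γ ts Δ →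
      WfTy Sg R csort Γ ⟨c, nuAct ν ts⟩
/-- `Γ ⊢ t : T` -/
inductive WfTmJ (Sg : Sig) (R : Set Rule) (csort : ℕ → ℕ) : Ctx → Tm → Ty → Prop
  | const : (⟨c, Δ, ν, some T⟩ : SEntry) ∈ Sg → WfSpJ Sg R csort Γ ts Δ →
      SubTy 0 Δ.size ts T T' →
      WfTmJ Sg R csort Γ (.head (.inr c) (nuAct ν ts)) T'
  | var : CtxAt Γ x Δ T → WfSpJ Sg R csort Γ ts Δ → SubTy 0 Δ.size ts T T' →
      WfTmJ Sg R csort Γ (.head (.inl x) ts) T'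
  | conv : WfTmJ Sg R csort Γ t T → WfTy Sg R csort Γ U → ConvTy R T U →
      WfTmJ Sg R csort Γ t U
/-- `Γ ⊢ 𝐭 : Δ` -/
inductive WfSpJ (Sg : Sig) (R : Set Rule) (csort : ℕ → ℕ) : Ctx → Sp → Ctx → Prop
  | nil : WfC Sg R csort Γ → WfSpJ Sg R csort Γ .nil .nil
  | snoc : WfSpJ Sg R csort Γ ts Δ → SubCtx 0 Δ.size ts Γ' Γ'' →
      SubTy Γ'.size Δ.size ts T T' → WfTmJ Sg R csort (Γ.append Γ'') t T' →
      WfSpJ Sg R csort Γ (.snoc ts Γ'.size t) (.snoc Δ Γ' T)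
end

/-- Generic judgments `𝒥`. -/
inductive Judg : Type
  | ctx : Judg
  | ty : Ty → Judg
  | tm : Tm → Ty → Judg
  | sp : Sp → Ctx → Judg

def WfJ (Sg : Sig) (R : Set Rule) (csort : ℕ → ℕ) (Γ : Ctx) : Judg → Prop
  | .ctx => WfC Sg R csort Γ
  | .ty T => WfTy Sg R csort Γ T
  | .tm t T => WfTmJ Sg R csort Γ t T
  | .sp ts Δ => WfSpJ Sg R csort Γ ts Δ

def shiftJudg (d k : ℕ) : Judg → Judg
  | .ctx => .ctx
  | .ty T => .ty (shiftTy d k T)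
  | .tm t T => .tm (shiftTm d k t) (shiftTy d k T)
  | .sp ts Δ => .sp (shiftSp d k ts) (shiftCtx d k Δ)

def SubJudg (k m : ℕ) (u : Sp) : Judg → Judg → Prop
  | .ctx, .ctx => True
  | .ty T, .ty T' => SubTy k m u T T'
  | .tm t T, .tm t' T' => SubTm k m u t t' ∧ SubTy k m u T T'
  | .sp ts Δ, .sp ts' Δ' => SubSp k m u ts ts' ∧ SubCtx k m u Δ Δ'
  | _, _ => False

/-- Whether a constant is declared in a signature. -/
def SigDecl (Sg : Sig) (c : ℕ) : Prop := ∃ e ∈ Sg, e.c = c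

/-- Restriction of a rewrite system to the rules mentioning only constants
declared in a (prefix) signature. -/
def restrict (R : Set Rule) (Sg : Sig) : Set Rule :=
  {r | r ∈ R ∧ (∀ c, ConstInTm c r.lhs → SigDecl Sg c) ∧
       (∀ c, ConstInTm c r.rhs → SigDecl Sg c)}

/-- Well-typed theories: each declaration is derivable in the prefix theory. -/
inductive WfSig (R : Set Rule) (csort : ℕ → ℕ) : Sig → Prop
  | nil : WfSig R csort []
  | consTm : WfSig R csort Sg → WfTy Sg (restrict R Sg) csort Δ T →
      ν.length = Δ.size → WfSig R csort (⟨c, Δ, ν, some T⟩ :: Sg)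
  | consTy : WfSig R csort Sg → WfC Sg (restrict R Sg) csort Δ →
      ν.length = Δ.size → WfSig R csort (⟨c, Δ, ν, none⟩ :: Sg)

/-- Subject reduction of a theory. -/
def SubjectRed (Sg : Sig) (R : Set Rule) (csort : ℕ → ℕ) : Prop :=
  ∀ Γ t T t', WfTmJ Sg R csort Γ t T → RedTm R t t' → WfTmJ Sg R csort Γ t' T

/-- Strong normalization of a theory. -/
def TheorySN (Sg : Sig) (R : Set Rule) (csort : ℕ → ℕ) : Prop :=
  ∀ Γ t T, WfTmJ Sg R csort Γ t T → SNTm R t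

/-- Type preservation of the rewrite rules. -/
def TypePreserving (Sg : Sig) (R : Set Rule) (csort : ℕ → ℕ) : Prop :=
  ∀ r ∈ R, ∀ (Γ : Ctx) (v : Sp) (l' r' : Tm) (T : Ty),
    WfSp (eraseSig csort Sg) (eraseCtx csort Γ) v r.γ →
    SubTm 0 r.γ.len v r.lhs l' → SubTm 0 r.γ.len v r.rhs r' →
    WfTmJ Sg R csort Γ l' T → WfTmJ Sg R csort Γ r' T

/-! ## Patterns -/

/-! Fully-applied Miller patterns: `m` is the number of flexible variables and
`γ₀` the rigid scope; a flexible variable (index `≥ γ₀.len`) must be applied to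
the identity spine of the rigid scope. -/
mutual
inductive PatTm (m : ℕ) : Scope → Tm → Prop
  | flex : γ₀.len ≤ x → x < γ₀.len + m →
      PatTm m γ₀ (.head (.inl x) (idSp γ₀))
  | rigid : PatSp m γ₀ sp → PatTm m γ₀ (.head (.inr c) sp)
inductive PatSp (m : ℕ) : Scope → Sp → Prop
  | nil : PatSp m γ₀ .nil
  | snoc : PatSp m γ₀ ts → PatTm m (γ₀.append δ) t →
      PatSp m γ₀ (.snoc ts δ.len t)
end

def PatTy (m : ℕ) (γ₀ : Scope) (T : Ty) : Prop := PatSp m γ₀ T.sp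

/-! Rigid patterns: patterns satisfying H₁ and H₂. -/
def RigidTy (Sg : Sig) (R : Set Rule) (m : ℕ) (γ₀ : Scope) (T : Ty) : Prop :=
  PatTy m γ₀ T ∧ H1Ty R T ∧ NoErasedTy Sg T

/-! ## Substitution of flexible variables (partial maps) -/

/-- A substitution for flexible variables: to a flexible index it may assign a
number of bound variables together with a body. -/
abbrev PSub := ℕ → Option (ℕ × Tm)

/-! Hereditary substitution of a flexible-variable assignment, at rigid depth
`k`. -/
mutual
inductive MSubTm (σ : PSub) : ℕ → Tm → Tm → Prop
  | const : MSubSp σ k sp sp' →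
      MSubTm σ k (.head (.inr c) sp) (.head (.inr c) sp')
  | low : x < k → MSubSp σ k sp sp' →
      MSubTm σ k (.head (.inl x) sp) (.head (.inl x) sp')
  | keep : k ≤ x → σ (x - k) = none → MSubSp σ k sp sp' →
      MSubTm σ k (.head (.inl x) sp) (.head (.inl x) sp')
  | subst : k ≤ x → σ (x - k) = some (n, t) → MSubSp σ k sp sp' →
      SubTm 0 n sp' (shiftTm k n t) r →
      MSubTm σ k (.head (.inl x) sp) r
inductive MSubSp (σ : PSub) : ℕ → Sp → Sp → Prop
  | nil : MSubSp σ k .nil .nil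
  | snoc : MSubSp σ k ts ts' → MSubTm σ (k + n) t t' →
      MSubSp σ k (.snoc ts n t) (.snoc ts' n t')
end

inductive MSubTy (σ : PSub) (k : ℕ) : Ty → Ty → Prop
  | mk : MSubSp σ k sp sp' → MSubTy σ k ⟨c, sp⟩ ⟨c, sp'⟩

/-! Reading back a flexible-variable assignment as a spine for a context. -/
inductive MapToSp : PSub → Ctx → Sp → Prop
  | nil : MapToSp σ .nil .nil
  | snoc : MapToSp (fun n => σ (n+1)) Γ v → σ 0 = some (Δ.size, t) →
      MapToSp σ (.snoc Γ Δ T) (.snoc v Δ.size t)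

/-! ## The matching algorithm -/

/-- `t` has `𝔖`-normal form `n`. -/
def SNF (R : Set Rule) (S : Tm → Tm → Prop) (t n : Tm) : Prop :=
  Relation.ReflTransGen S t n ∧ ∀ u, ¬ RedTm R n u

/-- Merging two flexible assignments, comparing `𝔖`-normal forms on the
duplicated (non-linear) variables. -/
def PMerge (R : Set Rule) (S : Tm → Tm → Prop) (σ₁ σ₂ σ : PSub) : Prop :=
  ∀ x, (σ₁ x = none → σ x = σ₂ x) ∧ (σ₂ x = none → σ x = σ₁ x) ∧
    (∀ n₁ t₁ n₂ t₂, σ₁ x = some (n₁, t₁) → σ₂ x = some (n₂, t₂) →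
      n₁ = n₂ ∧ ∃ v, σ x = some (n₁, v) ∧ SNF R S t₁ v ∧ SNF R S t₂ v)

/-! The matching algorithm `t ≺ u ⇝ σ` (with strategy `S`). -/
mutual
inductive MatchTm (R : Set Rule) (S : Tm → Tm → Prop) : Tm → Tm → PSub → Prop
  | flex : γ₀.len ≤ x →
      MatchTm R S (.head (.inl x) (idSp γ₀)) u
        (fun y => if y = x - γ₀.len then some (γ₀.len, u) else none)
  | rigid : Relation.ReflTransGen S u (.head (.inr c) us) →
      MatchSp R S ts us σ → MatchTm R S (.head (.inr c) ts) u σ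
inductive MatchSp (R : Set Rule) (S : Tm → Tm → Prop) : Sp → Sp → PSub → Prop
  | nil : MatchSp R S .nil .nil (fun _ => none)
  | snoc : MatchSp R S ts us σ₁ → MatchTm R S t u σ₂ → PMerge R S σ₁ σ₂ σ →
      MatchSp R S (.snoc ts n t) (.snoc us n u) σ
end

inductive MatchTy (R : Set Rule) (S : Tm → Tm → Prop) : Ty → Ty → PSub → Prop
  | mk : MatchSp R S ts us σ → MatchTy R S ⟨c, ts⟩ ⟨c, us⟩ σ

/-! Termination domain of the matching algorithm. -/
mutual
inductive DomMTm (R : Set Rule) (S : Tm → Tm → Prop) : Tm → Tm → Prop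
  | flex : DomMTm R S (.head (.inl x) ts) u
  | rigid : SNTm R u →
      (∀ us, Relation.ReflTransGen S u (.head (.inr c) us) → DomMSp R S ts us) →
      DomMTm R S (.head (.inr c) ts) u
inductive DomMSp (R : Set Rule) (S : Tm → Tm → Prop) : Sp → Sp → Prop
  | nilPat : DomMSp R S .nil us
  | nilSub : DomMSp R S ts .nil
  | snoc : DomMSp R S ts us → DomMTm R S t u →
      (∀ σ x n v, MatchSp R S ts us σ → σ x = some (n, v) → SNTm R v) →
      (∀ σ x n v, MatchTm R S t u σ → σ x = some (n, v) → SNTm R v) →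
      DomMSp R S (.snoc ts n' t) (.snoc us n' u)
end

inductive DomMTy (R : Set Rule) (S : Tm → Tm → Prop) : Ty → Ty → Prop
  | mk : (c = c' → DomMSp R S ts us) → DomMTy R S ⟨c, ts⟩ ⟨c', us⟩

/-! ## Moded signatures and theories -/

/-- Entries of a moded signature. -/
inductive MEntry : Type
  | ty : ℕ → Ctx → MEntry
  | inf : ℕ → Ctx → Ty → MEntry
  | chk : ℕ → Ctx → Ctx → Ty → MEntry
  | infS : ℕ → Ctx → Ctx → Ctx → Ty → Ctx → Ty → MEntry

abbrev MSig := List MEntry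

/-- Underlying signature entry of a moded entry. -/
def MEntry.toS : MEntry → SEntry
  | .ty c Δ => ⟨c, Δ, List.replicate Δ.size false, none⟩
  | .inf c Δ T => ⟨c, Δ, List.replicate Δ.size false, some T⟩
  | .chk c Δ' Δ T =>
      ⟨c, Δ'.append Δ,
        List.replicate Δ.size false ++ List.replicate Δ'.size true, some T⟩
  | .infS c Δ₁ Δ' Γx T Δ₂ U =>
      ⟨c, Ctx.append (Ctx.snoc (Δ₁.append Δ') Γx T) Δ₂,
        List.replicate Δ₂.size false ++ [false] ++
          List.replicate Δ'.size true ++ List.replicate Δ₁.size false, some U⟩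

def MSig.toSig (M : MSig) : Sig := M.map MEntry.toS

/-- Well-typed moded theories. -/
inductive WfMSig (R : Set Rule) (csort : ℕ → ℕ) : MSig → Prop
  | nil : WfMSig R csort []
  | ty : WfMSig R csort M →
      WfC (MSig.toSig M) (restrict R (MSig.toSig M)) csort Δ →
      WfMSig R csort (.ty c Δ :: M)
  | inf : WfMSig R csort M →
      WfTy (MSig.toSig M) (restrict R (MSig.toSig M)) csort Δ T →
      WfMSig R csort (.inf c Δ T :: M)
  | chk : WfMSig R csort M →
      WfC (MSig.toSig M) (restrict R (MSig.toSig M)) csort (Δ'.append Δ) →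
      WfTy (MSig.toSig M) (restrict R (MSig.toSig M)) csort Δ' T →
      RigidTy (MSig.toSig M) R Δ'.size .nil T →
      WfMSig R csort (.chk c Δ' Δ T :: M)
  | infS : WfMSig R csort M →
      WfTy (MSig.toSig M) (restrict R (MSig.toSig M)) csort
        (Ctx.append (Ctx.snoc (Δ₁.append Δ') Γx T) Δ₂) U →
      WfC (MSig.toSig M) (restrict R (MSig.toSig M)) csort (Δ₁.append Γx) →
      RigidTy (MSig.toSig M) R Δ'.size (eraseCtx csort Γx) T →
      WfMSig R csort (.infS c Δ₁ Δ' Γx T Δ₂ U :: M)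

/-- `𝔖`-normal-form comparison of two types (per Switch). -/
def NFEqTy (R : Set Rule) (T U : Ty) : Prop :=
  T.c = U.c ∧ ∃ N, Relation.ReflTransGen (RedSp R) T.sp N ∧
    Relation.ReflTransGen (RedSp R) U.sp N ∧ ∀ X, ¬ RedSp R N X

/-! ## The bidirectional typing algorithm -/

mutual
/-- `Γ ⊢ t ⇒ T` -/
inductive Infer (M : MSig) (R : Set Rule) (S : Tm → Tm → Prop) (csort : ℕ → ℕ) :
    Ctx → Tm → Ty → Prop
  | var : CtxAt Γ x Δ T → ChkSp M R S csort Γ ts Δ → SubTy 0 Δ.size ts T T' →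
      Infer M R S csort Γ (.head (.inl x) ts) T'
  | const : MEntry.inf c Δ T ∈ M → ChkSp M R S csort Γ ts Δ →
      SubTy 0 Δ.size ts T T' →
      Infer M R S csort Γ (.head (.inr c) ts) T'
  | constS : MEntry.infS c Δ₁ Δ' Γx T Δ₂ U ∈ M →
      ChkSp M R S csort Γ ts Δ₁ →
      SubCtx 0 Δ₁.size ts Γx Γx' →
      Infer M R S csort (Γ.append Γx') t V →
      MatchTy R S T V σ →
      MapToSp σ Δ' v →
      SubCtx 0 (Δ₁.size + Δ'.size + 1) (Sp.snoc (Sp.append ts v) Γx.size t) Δ₂ Δ₂' →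
      ChkSp M R S csort Γ us Δ₂' →
      SubTy 0 (Δ₁.size + Δ'.size + 1 + Δ₂.size)
        (Sp.append (Sp.snoc (Sp.append ts v) Γx.size t) us) U U' →
      Infer M R S csort Γ (.head (.inr c) (Sp.append (Sp.snoc ts Γx.size t) us)) U'
/-- `Γ ⊢ t ⇐ T` -/
inductive Check (M : MSig) (R : Set Rule) (S : Tm → Tm → Prop) (csort : ℕ → ℕ) :
    Ctx → Tm → Ty → Prop
  | switch : (∀ c sp, t = Tm.head (Sum.inr c) sp →
        ∀ Δ' Δ T', MEntry.chk c Δ' Δ T' ∉ M) →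
      Infer M R S csort Γ t U → NFEqTy R T U → Check M R S csort Γ t T
  | chk : MEntry.chk c Δ' Δ T ∈ M → MatchTy R S T V σ → MapToSp σ Δ' v →
      SubCtx 0 Δ'.size v Δ Δv → ChkSp M R S csort Γ ts Δv →
      Check M R S csort Γ (.head (.inr c) ts) V
/-- `Γ ⊢ T ⇔ □` -/
inductive ChkTy (M : MSig) (R : Set Rule) (S : Tm → Tm → Prop) (csort : ℕ → ℕ) :
    Ctx → Ty → Prop
  | mk : MEntry.ty c Δ ∈ M → ChkSp M R S csort Γ ts Δ →
      ChkTy M R S csort Γ (Ty.mk c ts)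
/-- `Γ ⊢ 𝐭 ⇐ Δ` -/
inductive ChkSp (M : MSig) (R : Set Rule) (S : Tm → Tm → Prop) (csort : ℕ → ℕ) :
    Ctx → Sp → Ctx → Prop
  | nil : ChkSp M R S csort Γ .nil .nil
  | snoc : ChkSp M R S csort Γ ts Δ → SubCtx 0 Δ.size ts Γx Γx' →
      SubTy Γx.size Δ.size ts T T' →
      Check M R S csort (Γ.append Γx') t T' →
      ChkSp M R S csort Γ (.snoc ts Γx.size t) (.snoc Δ Γx T)
end

/-! ## Well-moded terms -/

mutual
/-- Inferable terms `Tm⁺`. -/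
inductive InfTm (M : MSig) : Tm → Prop
  | var : SpWM M ts → InfTm M (.head (.inl x) ts)
  | const : MEntry.inf c Δ T ∈ M → SpWM M ts → Sp.len ts = Δ.size →
      InfTm M (.head (.inr c) ts)
  | constS : MEntry.infS c Δ₁ Δ' Γx T Δ₂ U ∈ M → SpWM M ts →
      Sp.len ts = Δ₁.size → InfTm M t → SpWM M us → Sp.len us = Δ₂.size →
      InfTm M (.head (.inr c) (Sp.append (Sp.snoc ts Γx.size t) us))
/-- Checkable terms `Tm⁻`. -/
inductive ChkTm (M : MSig) : Tm → Prop
  | switch : InfTm M t → ChkTm M t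
  | const : MEntry.chk c Δ' Δ T ∈ M → SpWM M ts → Sp.len ts = Δ.size →
      ChkTm M (.head (.inr c) ts)
/-- Well-moded spines `Sp^{+-}`. -/
inductive SpWM (M : MSig) : Sp → Prop
  | nil : SpWM M .nil
  | snoc : SpWM M ts → ChkTm M t → SpWM M (.snoc ts n t)
end

/-- Well-moded types `Ty^{+-}`. -/
def TyWM (M : MSig) (T : Ty) : Prop :=
  (∃ Δ, MEntry.ty T.c Δ ∈ M) ∧ SpWM M T.sp

/-! ## Termination domain of the bidirectional algorithm -/

mutual
inductive DomInf (M : MSig) (R : Set Rule) (S : Tm → Tm → Prop) (csort : ℕ → ℕ) :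
    Ctx → Tm → Prop
  | var : (∀ Δ T, CtxAt Γ x Δ T → DomChkSp M R S csort Γ ts Δ) →
      DomInf M R S csort Γ (.head (.inl x) ts)
  | const :
      (∀ Δ T, MEntry.inf c Δ T ∈ M → DomChkSp M R S csort Γ ts Δ) →
      (∀ Δ₁ Δ' Γx T Δ₂ U ts₁ t us, MEntry.infS c Δ₁ Δ' Γx T Δ₂ U ∈ M →
        ts = Sp.append (Sp.snoc ts₁ Γx.size t) us →
        DomChkSp M R S csort Γ ts₁ Δ₁) →
      (∀ Δ₁ Δ' Γx T Δ₂ U ts₁ t us, MEntry.infS c Δ₁ Δ' Γx T Δ₂ U ∈ M →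
        ts = Sp.append (Sp.snoc ts₁ Γx.size t) us →
        ∀ Γx', SubCtx 0 Δ₁.size ts₁ Γx Γx' →
          DomInf M R S csort (Γ.append Γx') t) →
      (∀ Δ₁ Δ' Γx T Δ₂ U ts₁ t us, MEntry.infS c Δ₁ Δ' Γx T Δ₂ U ∈ M →
        ts = Sp.append (Sp.snoc ts₁ Γx.size t) us →
        ∀ Γx', SubCtx 0 Δ₁.size ts₁ Γx Γx' →
          ∀ V, Infer M R S csort (Γ.append Γx') t V → DomMTy R S T V) →
      (∀ Δ₁ Δ' Γx T Δ₂ U ts₁ t us, MEntry.infS c Δ₁ Δ' Γx T Δ₂ U ∈ M →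
        ts = Sp.append (Sp.snoc ts₁ Γx.size t) us →
        ∀ Γx', SubCtx 0 Δ₁.size ts₁ Γx Γx' →
          ∀ V σ v Δ₂', Infer M R S csort (Γ.append Γx') t V →
            MatchTy R S T V σ → MapToSp σ Δ' v →
            SubCtx 0 (Δ₁.size + Δ'.size + 1)
              (Sp.snoc (Sp.append ts₁ v) Γx.size t) Δ₂ Δ₂' →
            DomChkSp M R S csort Γ us Δ₂') →
      DomInf M R S csort Γ (.head (.inr c) ts)
inductive DomChk (M : MSig) (R : Set Rule) (S : Tm → Tm → Prop) (csort : ℕ → ℕ) :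
    Ctx → Tm → Ty → Prop
  | mk :
      ((∀ c sp, t = Tm.head (Sum.inr c) sp →
          ∀ Δ' Δ T', MEntry.chk c Δ' Δ T' ∉ M) →
        DomInf M R S csort Γ t) →
      ((∀ c sp, t = Tm.head (Sum.inr c) sp →
          ∀ Δ' Δ T', MEntry.chk c Δ' Δ T' ∉ M) →
        SNSp R T.sp ∧ (∀ U, Infer M R S csort Γ t U → SNSp R U.sp)) →
      (∀ c sp Δ' Δ T', t = Tm.head (Sum.inr c) sp → MEntry.chk c Δ' Δ T' ∈ M →
        DomMTy R S T' T) →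
      (∀ c sp Δ' Δ T', t = Tm.head (Sum.inr c) sp → MEntry.chk c Δ' Δ T' ∈ M →
        ∀ σ v Δv, MatchTy R S T' T σ → MapToSp σ Δ' v →
          SubCtx 0 Δ'.size v Δ Δv → DomChkSp M R S csort Γ sp Δv) →
      DomChk M R S csort Γ t T
inductive DomChkTy (M : MSig) (R : Set Rule) (S : Tm → Tm → Prop) (csort : ℕ → ℕ) :
    Ctx → Ty → Prop
  | mk : (∀ Δ, MEntry.ty c Δ ∈ M → DomChkSp M R S csort Γ ts Δ) →
      DomChkTy M R S csort Γ (Ty.mk c ts)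
inductive DomChkSp (M : MSig) (R : Set Rule) (S : Tm → Tm → Prop) (csort : ℕ → ℕ) :
    Ctx → Sp → Ctx → Prop
  | nilSp : DomChkSp M R S csort Γ .nil Δ
  | nilCtx : DomChkSp M R S csort Γ ts .nil
  | snoc : DomChkSp M R S csort Γ ts Δ →
      (∀ Γx' T', SubCtx 0 Δ.size ts Γx Γx' → SubTy Γx.size Δ.size ts T T' →
        DomChk M R S csort (Γ.append Γx') t T') →
      DomChkSp M R S csort Γ (.snoc ts n t) (.snoc Δ Γx T)
end

end CompLF
namespace CompLF

/-! ### Auxiliary development for `subst_exchange` -/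

mutual
/-- Size of a term. -/
def Tm.sz : Tm → ℕ
  | .head _ sp => Sp.sz sp + 1
/-- Size of a spine. -/
def Sp.sz : Sp → ℕ
  | .nil => 0
  | .snoc ts _ t => Sp.sz ts + Tm.sz t + 1
end

mutual
/-- Depth-indexed hereditary substitution on terms: the first index bounds the
nesting depth of hereditary (`mid`) expansions. -/
inductive SubTmD : ℕ → ℕ → ℕ → Sp → Tm → Tm → Prop
  | low : x < k → SubSpD d k m u sp sp' →
      SubTmD d k m u (.head (.inl x) sp) (.head (.inl x) sp')
  | high : k + m ≤ x → SubSpD d k m u sp sp' →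
      SubTmD d k m u (.head (.inl x) sp) (.head (.inl (x - m)) sp')
  | const : SubSpD d k m u sp sp' →
      SubTmD d k m u (.head (.inr c) sp) (.head (.inr c) sp')
  | mid : k ≤ x → x < k + m → SpAt u (x - k) n t → SubSpD d k m u sp sp' →
      SubTmD d' 0 n sp' (shiftTm k n t) r → d' < d →
      SubTmD d k m u (.head (.inl x) sp) r
/-- Depth-indexed hereditary substitution on spines. -/
inductive SubSpD : ℕ → ℕ → ℕ → Sp → Sp → Sp → Prop
  | nil : SubSpD d k m u .nil .nil
  | snoc : SubSpD d k m u ts ts' → SubTmD d (k + n) m u t t' →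
      SubSpD d k m u (.snoc ts n t) (.snoc ts' n t')
end

mutual
theorem SubTmD.mono (h : SubTmD d k m u e e') (hd : d ≤ d₂) : SubTmD d₂ k m u e e' :=
  match h with
  | .low h hsp => .low h (hsp.mono hd)
  | .high h hsp => .high h (hsp.mono hd)
  | .const hsp => .const (hsp.mono hd)
  | .mid h1 h2 h3 hsp hin hlt => .mid h1 h2 h3 (hsp.mono hd) hin (lt_of_lt_of_le hlt hd)
theorem SubSpD.mono (h : SubSpD d k m u ts ts') (hd : d ≤ d₂) : SubSpD d₂ k m u ts ts' :=
  match h with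
  | .nil => .nil
  | .snoc hts ht => .snoc (hts.mono hd) (ht.mono hd)
end

theorem SubTm.toD {k m u e e'} (h : SubTm k m u e e') : ∃ d, SubTmD d k m u e e' := by
  induction h using SubTm.rec
    (motive_2 := fun k m u ts ts' _ => ∃ d, SubSpD d k m u ts ts') with
  | low h _ ih => obtain ⟨d, hd⟩ := ih; exact ⟨d, .low h hd⟩
  | high h _ ih => obtain ⟨d, hd⟩ := ih; exact ⟨d, .high h hd⟩
  | const _ ih => obtain ⟨d, hd⟩ := ih; exact ⟨d, .const hd⟩
  | mid h1 h2 h3 _ _ ih ih2 =>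
      obtain ⟨d1, hd1⟩ := ih; obtain ⟨d2, hd2⟩ := ih2
      exact ⟨max d1 (d2 + 1), .mid h1 h2 h3 (hd1.mono (le_max_left _ _)) hd2
        (lt_of_lt_of_le (Nat.lt_succ_self d2) (le_max_right _ _))⟩
  | nil => exact ⟨0, .nil⟩
  | snoc _ _ ih ih2 =>
      obtain ⟨d1, hd1⟩ := ih; obtain ⟨d2, hd2⟩ := ih2
      exact ⟨max d1 d2, .snoc (hd1.mono (le_max_left _ _)) (hd2.mono (le_max_right _ _))⟩

theorem SubSp.toD {k m u ts ts'} (h : SubSp k m u ts ts') : ∃ d, SubSpD d k m u ts ts' := by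
  induction h using SubSp.rec
    (motive_1 := fun k m u e e' _ => ∃ d, SubTmD d k m u e e') with
  | low h _ ih => obtain ⟨d, hd⟩ := ih; exact ⟨d, .low h hd⟩
  | high h _ ih => obtain ⟨d, hd⟩ := ih; exact ⟨d, .high h hd⟩
  | const _ ih => obtain ⟨d, hd⟩ := ih; exact ⟨d, .const hd⟩
  | mid h1 h2 h3 _ _ ih ih2 =>
      obtain ⟨d1, hd1⟩ := ih; obtain ⟨d2, hd2⟩ := ih2
      exact ⟨max d1 (d2 + 1), .mid h1 h2 h3 (hd1.mono (le_max_left _ _)) hd2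
        (lt_of_lt_of_le (Nat.lt_succ_self d2) (le_max_right _ _))⟩
  | nil => exact ⟨0, .nil⟩
  | snoc _ _ ih ih2 =>
      obtain ⟨d1, hd1⟩ := ih; obtain ⟨d2, hd2⟩ := ih2
      exact ⟨max d1 d2, .snoc (hd1.mono (le_max_left _ _)) (hd2.mono (le_max_right _ _))⟩

mutual
theorem SubTmD.toSub (h : SubTmD d k m u e e') : SubTm k m u e e' :=
  match h with
  | .low h hsp => .low h hsp.toSub
  | .high h hsp => .high h hsp.toSub
  | .const hsp => .const hsp.toSub
  | .mid h1 h2 h3 hsp hin _ => .mid h1 h2 h3 hsp.toSub hin.toSub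
theorem SubSpD.toSub (h : SubSpD d k m u ts ts') : SubSp k m u ts ts' :=
  match h with
  | .nil => .nil
  | .snoc hts ht => .snoc hts.toSub ht.toSub
end

theorem spAt_det (h : SpAt u j n t) : ∀ {n' t'}, SpAt u j n' t' → n = n' ∧ t = t' := by
  induction h with
  | here => intro n' t' h'; cases h'; exact ⟨rfl, rfl⟩
  | there _ ih => intro n' t' h'; cases h' with | there h' => exact ih h'

theorem spAt_shift (h : SpAt u j n w) :
    ∀ (dd i : ℕ), SpAt (shiftSp dd i u) j n (shiftTm dd (i + n) w) := by
  induction h with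
  | here => intro dd i; exact .here
  | there _ ih => intro dd i; exact .there (ih dd i)

theorem spAtD_sub (h : SpAt t j n t₀) :
    ∀ {dh c m u t'}, SubSpD dh c m u t t' →
      ∃ t₀', SpAt t' j n t₀' ∧ SubTmD dh (c + n) m u t₀ t₀' := by
  induction h with
  | here =>
      intro dh c m u t' h'
      cases h' with | snoc hts ht => exact ⟨_, .here, ht⟩
  | there _ ih =>
      intro dh c m u t' h'
      cases h' with
      | snoc hts ht =>
          obtain ⟨t₀', h1, h2⟩ := ih hts
          exact ⟨t₀', .there h1, h2⟩

mutual
theorem shiftTm_comp : ∀ (e : Tm) (a b j j₂ : ℕ), j ≤ j₂ → j₂ ≤ j + b →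
    shiftTm a j₂ (shiftTm b j e) = shiftTm (a + b) j e
  | .head (.inl x) sp, a, b, j, j₂, h1, h2 => by
      simp only [shiftTm, shiftSp_comp sp a b j j₂ h1 h2]
      congr 2
      split_ifs <;> omega
  | .head (.inr c) sp, a, b, j, j₂, h1, h2 => by
      simp only [shiftTm, shiftSp_comp sp a b j j₂ h1 h2]
theorem shiftSp_comp : ∀ (sp : Sp) (a b j j₂ : ℕ), j ≤ j₂ → j₂ ≤ j + b →
    shiftSp a j₂ (shiftSp b j sp) = shiftSp (a + b) j sp
  | .nil, _, _, _, _, _, _ => rfl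
  | .snoc ts n t, a, b, j, j₂, h1, h2 => by
      simp only [shiftSp, shiftSp_comp ts a b j j₂ h1 h2]
      rw [shiftTm_comp t a b (j + n) (j₂ + n) (by omega) (by omega)]
end

mutual
theorem shiftTm_swap : ∀ (e : Tm) (d₁ d₂ j₁ j₂ : ℕ), j₂ ≤ j₁ →
    shiftTm d₁ (j₁ + d₂) (shiftTm d₂ j₂ e) = shiftTm d₂ j₂ (shiftTm d₁ j₁ e)
  | .head (.inl x) sp, d₁, d₂, j₁, j₂, h1 => by
      simp only [shiftTm, shiftSp_swap sp d₁ d₂ j₁ j₂ h1]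
      congr 2
      split_ifs <;> omega
  | .head (.inr c) sp, d₁, d₂, j₁, j₂, h1 => by
      simp only [shiftTm, shiftSp_swap sp d₁ d₂ j₁ j₂ h1]
theorem shiftSp_swap : ∀ (sp : Sp) (d₁ d₂ j₁ j₂ : ℕ), j₂ ≤ j₁ →
    shiftSp d₁ (j₁ + d₂) (shiftSp d₂ j₂ sp) = shiftSp d₂ j₂ (shiftSp d₁ j₁ sp)
  | .nil, _, _, _, _, _ => rfl
  | .snoc ts n t, d₁, d₂, j₁, j₂, h1 => by
      simp only [shiftSp, shiftSp_swap ts d₁ d₂ j₁ j₂ h1]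
      rw [show j₁ + d₂ + n = (j₁ + n) + d₂ from by omega,
        shiftTm_swap t d₁ d₂ (j₁ + n) (j₂ + n) (by omega)]
end

mutual
theorem cancelT : ∀ (e : Tm) (j q : ℕ) (v : Sp), SubTmD 0 j q v (shiftTm q j e) e
  | .head (.inl x) sp, j, q, v => by
      rcases Nat.lt_or_ge x j with h | h
      · simpa only [shiftTm, if_pos h] using SubTmD.low h (cancelS sp j q v)
      · have := SubTmD.high (u := v) (show j + q ≤ x + q by omega) (cancelS sp j q v)
        simpa only [shiftTm, if_neg (by omega : ¬ x < j), Nat.add_sub_cancel] using this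
  | .head (.inr c) sp, j, q, v => by
      simpa only [shiftTm] using SubTmD.const (cancelS sp j q v)
theorem cancelS : ∀ (sp : Sp) (j q : ℕ) (v : Sp), SubSpD 0 j q v (shiftSp q j sp) sp
  | .nil, _, _, _ => .nil
  | .snoc ts n t, j, q, v => by
      simpa only [shiftSp] using SubSpD.snoc (cancelS ts j q v) (cancelT t (j + n) q v)
end

mutual
theorem belowT (h : SubTmD d K m u x y) :
    ∀ k j, j ≤ K → SubTmD d (K + k) m u (shiftTm k j x) (shiftTm k j y) :=
  match h with
  | .low (x := z) hz hsp => fun k j hj => by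
      rcases Nat.lt_or_ge z j with h1 | h1
      · simpa only [shiftTm, if_pos h1, if_pos (show z < K + k by omega)] using
          SubTmD.low (by omega) (belowS hsp k j hj)
      · simpa only [shiftTm, if_neg (by omega : ¬ z < j)] using
          SubTmD.low (show z + k < K + k by omega) (belowS hsp k j hj)
  | .high (x := z) hz hsp => fun k j hj => by
      have hr := SubTmD.high (u := u) (show (K + k) + m ≤ z + k by omega) (belowS hsp k j hj)
      have e1 : ¬ z < j := by omega
      have e2 : ¬ z - m < j := by omega
      have e3 : z + k - m = z - m + k := by omega
      simpa only [shiftTm, if_neg e1, if_neg e2, e3] using hr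
  | .const hsp => fun k j hj => by
      simpa only [shiftTm] using SubTmD.const (belowS hsp k j hj)
  | .mid (x := z) (n := n₁) (t := w) (r := r) hz1 hz2 hspat hsub hin hlt => by
      intro k j hj
      have hinS := aboveT hin k j
      rw [show (0 : ℕ) + n₁ + j = n₁ + j from by omega, show (0 : ℕ) + j = j from by omega,
        shiftTm_comp w k K n₁ (n₁ + j) (by omega) (by omega)] at hinS
      have e1 : ¬ z < j := by omega
      have hr := SubTmD.mid (show K + k ≤ z + k by omega) (show z + k < K + k + m by omega)
        (show SpAt u (z + k - (K + k)) n₁ w from by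
          rw [show z + k - (K + k) = z - K from by omega]; exact hspat)
        (belowS hsub k j hj)
        (show SubTmD _ 0 n₁ _ (shiftTm (K + k) n₁ w) (shiftTm k j r) from by
          rw [show K + k = k + K from by omega]; exact hinS) hlt
      simpa only [shiftTm, if_neg e1] using hr
theorem belowS (h : SubSpD d K m u xs ys) :
    ∀ k j, j ≤ K → SubSpD d (K + k) m u (shiftSp k j xs) (shiftSp k j ys) :=
  match h with
  | .nil => fun _ _ _ => .nil
  | .snoc (n := n) hts ht => fun k j hj => by
      have h1 := belowS hts k j hj
      have h2 := belowT ht k (j + n) (by omega)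
      rw [show K + n + k = (K + k) + n from by omega] at h2
      simpa only [shiftSp] using SubSpD.snoc h1 h2
theorem aboveT (h : SubTmD d K m u x y) :
    ∀ k j, SubTmD d K m (shiftSp k j u) (shiftTm k (K + m + j) x) (shiftTm k (K + j) y) :=
  match h with
  | .low (x := z) hz hsp => fun k j => by
      simpa only [shiftTm, if_pos (show z < K + m + j by omega),
        if_pos (show z < K + j by omega)] using SubTmD.low hz (aboveS hsp k j)
  | .high (x := z) hz hsp => fun k j => by
      rcases Nat.lt_or_ge z (K + m + j) with h1 | h1
      · simpa only [shiftTm, if_pos h1, if_pos (show z - m < K + j by omega)] using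
          SubTmD.high hz (aboveS hsp k j)
      · have hr := SubTmD.high (show K + m ≤ z + k by omega) (aboveS hsp k j)
        have e3 : z + k - m = z - m + k := by omega
        simpa only [shiftTm, if_neg (by omega : ¬ z < K + m + j),
          if_neg (by omega : ¬ z - m < K + j), e3] using hr
  | .const hsp => fun k j => by
      simpa only [shiftTm] using SubTmD.const (aboveS hsp k j)
  | .mid (x := z) (n := n₁) (t := w) (r := r) hz1 hz2 hspat hsub hin hlt => by
      intro k j
      have hinS := aboveT hin k (K + j)
      rw [show (0 : ℕ) + n₁ + (K + j) = (n₁ + j) + K from by omega,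
        show (0 : ℕ) + (K + j) = K + j from by omega,
        shiftTm_swap w k K (n₁ + j) n₁ (by omega)] at hinS
      have hr := SubTmD.mid (u := shiftSp k j u) hz1 hz2
        (show SpAt (shiftSp k j u) (z - K) n₁ (shiftTm k (j + n₁) w) from spAt_shift hspat k j)
        (aboveS hsub k j)
        (show SubTmD _ 0 n₁ _ (shiftTm K n₁ (shiftTm k (j + n₁) w)) (shiftTm k (K + j) r) from by
          rw [show j + n₁ = n₁ + j from by omega]; exact hinS) hlt
      simpa only [shiftTm, if_pos (show z < K + m + j by omega)] using hr
theorem aboveS (h : SubSpD d K m u xs ys) :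
    ∀ k j, SubSpD d K m (shiftSp k j u) (shiftSp k (K + m + j) xs) (shiftSp k (K + j) ys) :=
  match h with
  | .nil => fun _ _ => .nil
  | .snoc (n := n) hts ht => fun k j => by
      have h1 := aboveS hts k j
      have h2 := aboveT ht k j
      rw [show K + n + m + j = (K + m + j) + n from by omega,
        show K + n + j = (K + j) + n from by omega] at h2
      simpa only [shiftSp] using SubSpD.snoc h1 h2
end

mutual
theorem SubTmD.det (h : SubTmD d k m u e a) : ∀ {d₂ b}, SubTmD d₂ k m u e b → a = b :=
  match h with
  | .low hx hsp => fun h₂ => by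
      cases h₂ with
      | low hx' hsp' => rw [SubSpD.det hsp hsp']
      | high hx' _ => exfalso; omega
      | mid hx1 hx2 _ _ _ _ => exfalso; omega
  | .high hx hsp => fun h₂ => by
      cases h₂ with
      | low hx' _ => exfalso; omega
      | mid _ hx2 _ _ _ _ => exfalso; omega
      | high _ hsp' => rw [SubSpD.det hsp hsp']
  | .const hsp => fun h₂ => by
      cases h₂ with
      | const hsp' => rw [SubSpD.det hsp hsp']
  | .mid hx1 hx2 hspat hsub hin hlt => fun h₂ => by
      cases h₂ with
      | low hx' _ => exfalso; omega
      | high hx' _ => exfalso; omega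
      | mid hx1' hx2' hspat' hsub' hin' hlt' =>
          obtain ⟨hn, ht⟩ := spAt_det hspat hspat'
          subst hn; subst ht
          have hsp := SubSpD.det hsub hsub'
          subst hsp
          exact SubTmD.det hin hin'
theorem SubSpD.det (h : SubSpD d k m u ts a) : ∀ {d₂ b}, SubSpD d₂ k m u ts b → a = b :=
  match h with
  | .nil => fun h₂ => by cases h₂; rfl
  | .snoc hts ht => fun h₂ => by
      cases h₂ with
      | snoc hts' ht' => rw [SubSpD.det hts hts', SubTmD.det ht ht']
end

/-- The key lemma: simultaneous existence (with depth bounds) of the two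
composite hereditary substitutions, together with equality of their results. -/
theorem existAux : ∀ (N M : ℕ),
    (∀ {dh da db c k q m : ℕ} {u t t' sp sp₁ sp' : Sp},
       SubSpD dh c m u t t' → SubSpD da k q t sp sp₁ →
       SubSpD db (k + q + c) m u sp sp' →
       max dh db + da ≤ N → Sp.sz sp ≤ M →
       ∃ S, SubSpD (max dh db) (k + c) m u sp₁ S ∧ SubSpD da k q t' sp' S) ∧
    (∀ {dh da db c k q m : ℕ} {u t t' : Sp} {e a b : Tm},
       SubSpD dh c m u t t' → SubTmD da k q t e a →
       SubTmD db (k + q + c) m u e b →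
       max dh db + da ≤ N → Tm.sz e ≤ M →
       ∃ r, SubTmD (max dh db) (k + c) m u a r ∧ SubTmD da k q t' b r) := by
  intro N
  induction N using Nat.strong_induction_on with
  | _ N IHN =>
  intro M
  induction M using Nat.strong_induction_on with
  | _ M IHM =>
  constructor
  · -- spines
    intro dh da db c k q m u t t' sp sp₁ sp' HT A1 B1 hN hM
    cases sp with
    | nil =>
        cases A1; cases B1
        exact ⟨.nil, .nil, .nil⟩
    | snoc ts n w =>
        cases A1 with | snoc A1t A1w =>
        cases B1 with | snoc B1t B1w =>
        have hM1 : Sp.sz ts + Tm.sz w + 1 ≤ M := by simpa [Sp.sz] using hM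
        have hM' : M - 1 < M := by omega
        obtain ⟨S0, X0, Y0⟩ := (IHM (M-1) hM').1 HT A1t B1t hN (by omega)
        rw [show k + q + c + n = k + n + q + c from by omega] at B1w
        obtain ⟨r, Xw, Yw⟩ := (IHM (M-1) hM').2 HT A1w B1w hN (by omega)
        rw [show k + n + c = k + c + n from by omega] at Xw
        exact ⟨.snoc S0 n r, .snoc X0 Xw, .snoc Y0 Yw⟩
  · -- terms
    intro dh da db c k q m u t t' e a b HT A1 B1 hN hM
    cases e with | head h0 sp =>
    have hM1 : Sp.sz sp + 1 ≤ M := by simpa [Tm.sz] using hM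
    have hM' : M - 1 < M := by omega
    have hsz : Sp.sz sp ≤ M - 1 := by omega
    cases h0 with
    | inr c₀ =>
        cases A1 with | const A1s =>
        cases B1 with | const B1s =>
        obtain ⟨S, XS, YS⟩ := (IHM (M-1) hM').1 HT A1s B1s hN hsz
        exact ⟨.head (.inr c₀) S, .const XS, .const YS⟩
    | inl x =>
      rcases Nat.lt_or_ge x k with h1 | h1
      · -- region 1 : x < k
        cases A1 with
        | high hx _ => exfalso; omega
        | mid hx1 _ _ _ _ _ => exfalso; omega
        | low _ A1s =>
          cases B1 with
          | high hx _ => exfalso; omega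
          | mid hx1 _ _ _ _ _ => exfalso; omega
          | low _ B1s =>
              obtain ⟨S, XS, YS⟩ := (IHM (M-1) hM').1 HT A1s B1s hN hsz
              exact ⟨.head (.inl x) S, .low (by omega) XS, .low (by omega) YS⟩
      · rcases Nat.lt_or_ge x (k + q) with h2 | h2
        · -- region 2 (β) : x in the t-segment
          cases A1 with
          | low hx _ => exfalso; omega
          | high hx _ => exfalso; omega
          | mid hx1 hx2 hspat hsub hin hlt =>
            rename_i n₀ t₀ sp₁s da'
            cases B1 with
            | high hx _ => exfalso; omega
            | mid hx1' _ _ _ _ _ => exfalso; omega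
            | low _ B1s =>
              obtain ⟨t₀', hspat', d₀⟩ := spAtD_sub hspat HT
              have S₁ := belowT d₀ k n₀ (by omega)
              rw [show c + n₀ + k = 0 + n₀ + (k + c) from by omega] at S₁
              obtain ⟨S, XS, YS⟩ := (IHM (M-1) hM').1 HT hsub B1s hN hsz
              have hNlt : N - 1 < N := by omega
              obtain ⟨r, X₂, Y₂⟩ := (IHN (N-1) hNlt (Tm.sz (shiftTm k n₀ t₀))).2 XS hin S₁
                (by omega) (le_refl _)
              refine ⟨r, ?_, ?_⟩
              · rw [show max (max dh db) dh = max dh db from by omega,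
                  show 0 + (k + c) = k + c from by omega] at X₂
                exact X₂
              · exact .mid h1 h2 hspat' YS Y₂ hlt
        · rcases Nat.lt_or_ge x (k + q + c) with h3 | h3
          · -- region 3 : the gap
            cases A1 with
            | low hx _ => exfalso; omega
            | mid _ hx2 _ _ _ _ => exfalso; omega
            | high hx A1s =>
              cases B1 with
              | high hx' _ => exfalso; omega
              | mid hx1' _ _ _ _ _ => exfalso; omega
              | low _ B1s =>
                obtain ⟨S, XS, YS⟩ := (IHM (M-1) hM').1 HT A1s B1s hN hsz
                exact ⟨.head (.inl (x - q)) S, .low (by omega) XS, .high h2 YS⟩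
          · rcases Nat.lt_or_ge x (k + q + c + m) with h4 | h4
            · -- region 4 (γ) : x in the u-segment
              cases A1 with
              | low hx _ => exfalso; omega
              | mid _ hx2 _ _ _ _ => exfalso; omega
              | high hx A1s =>
                cases B1 with
                | low hx' _ => exfalso; omega
                | high hx' _ => exfalso; omega
                | mid hx1' hx2' hspatU hsubB G hdb' =>
                  rename_i n₁ u₀ sp's db'
                  obtain ⟨S, XS, YS⟩ := (IHM (M-1) hM').1 HT A1s hsubB hN hsz
                  have SC := cancelT (shiftTm (k + c) n₁ u₀) (n₁ + k) q t'
                  rw [shiftTm_comp u₀ q (k + c) n₁ (n₁ + k) (by omega) (by omega),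
                    show q + (k + c) = k + q + c from by omega,
                    show n₁ + k = 0 + n₁ + k from by omega] at SC
                  have hNlt : N - 1 < N := by omega
                  obtain ⟨r, X₂, Y₂⟩ :=
                    (IHN (N-1) hNlt (Tm.sz (shiftTm (k + q + c) n₁ u₀))).2 YS G SC
                      (by omega) (le_refl _)
                  refine ⟨r, ?_, ?_⟩
                  · refine SubTmD.mid (show k + c ≤ x - q by omega)
                      (show x - q < k + c + m by omega) ?_ XS Y₂ (by omega)
                    rw [show x - q - (k + c) = x - (k + q + c) from by omega]
                    exact hspatU
                  · rw [show max da 0 = da from by omega,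
                      show 0 + k = k from by omega] at X₂
                    exact X₂
            · -- region 5 : above everything
              cases A1 with
              | low hx _ => exfalso; omega
              | mid _ hx2 _ _ _ _ => exfalso; omega
              | high hx A1s =>
                cases B1 with
                | low hx' _ => exfalso; omega
                | mid _ hx2' _ _ _ _ => exfalso; omega
                | high hx' B1s =>
                  obtain ⟨S, XS, YS⟩ := (IHM (M-1) hM').1 HT A1s B1s hN hsz
                  refine ⟨.head (.inl (x - q - m)) S, ?_, ?_⟩
                  · exact SubTmD.high (show (k + c) + m ≤ x - q by omega) XS
                  · have := SubTmD.high (show k + q ≤ x - m by omega) YS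
                    rw [show x - m - q = x - q - m from by omega] at this
                    exact this

theorem subTm_det {k m : ℕ} {u : Sp} {e a b : Tm}
    (h1 : SubTm k m u e a) (h2 : SubTm k m u e b) : a = b := by
  obtain ⟨d1, h1⟩ := h1.toD
  obtain ⟨d2, h2⟩ := h2.toD
  exact h1.det h2

theorem subSp_det {k m : ℕ} {u : Sp} {e a b : Sp}
    (h1 : SubSp k m u e a) (h2 : SubSp k m u e b) : a = b := by
  obtain ⟨d1, h1⟩ := h1.toD
  obtain ⟨d2, h2⟩ := h2.toD
  exact h1.det h2

theorem exchangeTm {k q m : ℕ} {u t t' : Sp} (ht : SubSp 0 m u t t')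
    {e a a' b b' : Tm} (A1 : SubTm k q t e a) (A2 : SubTm k m u a a')
    (B1 : SubTm (k + q) m u e b) (B2 : SubTm k q t' b b') : a' = b' := by
  obtain ⟨dh, HT⟩ := ht.toD
  obtain ⟨da, A1d⟩ := A1.toD
  have B1' : SubTm (k + q + 0) m u e b := by rwa [Nat.add_zero]
  obtain ⟨db, B1d⟩ := B1'.toD
  obtain ⟨r, X, Y⟩ :=
    (existAux (max dh db + da) (Tm.sz e)).2 HT A1d B1d (le_refl _) (le_refl _)
  have hX : SubTm (k + 0) m u a r := X.toSub
  rw [Nat.add_zero] at hX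
  exact (subTm_det A2 hX).trans (subTm_det B2 Y.toSub).symm

theorem exchangeSp {k q m : ℕ} {u t t' : Sp} (ht : SubSp 0 m u t t')
    {e a a' b b' : Sp} (A1 : SubSp k q t e a) (A2 : SubSp k m u a a')
    (B1 : SubSp (k + q) m u e b) (B2 : SubSp k q t' b b') : a' = b' := by
  obtain ⟨dh, HT⟩ := ht.toD
  obtain ⟨da, A1d⟩ := A1.toD
  have B1' : SubSp (k + q + 0) m u e b := by rwa [Nat.add_zero]
  obtain ⟨db, B1d⟩ := B1'.toD
  obtain ⟨r, X, Y⟩ :=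
    (existAux (max dh db + da) (Sp.sz e)).1 HT A1d B1d (le_refl _) (le_refl _)
  have hX : SubSp (k + 0) m u a r := X.toSub
  rw [Nat.add_zero] at hX
  exact (subSp_det A2 hX).trans (subSp_det B2 Y.toSub).symm

theorem exchangeTy {k q m : ℕ} {u t t' : Sp} (ht : SubSp 0 m u t t')
    {e a a' b b' : Ty} (A1 : SubTy k q t e a) (A2 : SubTy k m u a a')
    (B1 : SubTy (k + q) m u e b) (B2 : SubTy k q t' b b') : a' = b' := by
  cases A1 with | mk h1 =>
  cases A2 with | mk h2 =>
  cases B1 with | mk h3 =>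
  cases B2 with | mk h4 =>
  rw [exchangeSp ht h1 h2 h3 h4]

theorem subCtx_size {k m : ℕ} {u : Sp} {Γ Γ' : Ctx} (h : SubCtx k m u Γ Γ') :
    Ctx.size Γ' = Ctx.size Γ := by
  induction h with
  | nil => rfl
  | snoc _ _ _ ih _ => simpa [Ctx.size] using ih

theorem exchangeCtx {q m : ℕ} {u : Sp} {k : ℕ} {t : Sp} {Γ Γ₁ : Ctx}
    (A1 : SubCtx k q t Γ Γ₁) :
    ∀ {t' : Sp}, SubSp 0 m u t t' → ∀ {a' b b' : Ctx},
      SubCtx k m u Γ₁ a' → SubCtx (k + q) m u Γ b → SubCtx k q t' b b' → a' = b' := by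
  induction A1 with
  | nil =>
      intro t' ht a' b b' A2 B1 B2
      cases A2; cases B1; cases B2; rfl
  | @snoc k' q' t₀ Γ Γ₁ Δ Δ₁ T T₁ hΓ hΔ hT ihΓ ihΔ =>
      intro t' ht a' b b' A2 B1 B2
      cases A2 with | snoc hΓ₂ hΔ₂ hT₂ =>
      cases B1 with | snoc hΓb hΔb hTb =>
      cases B2 with | snoc hΓ₃ hΔ₃ hT₃ =>
      have hs1 := subCtx_size hΓ
      have hs1' := subCtx_size hΔ
      have hsb := subCtx_size hΓb
      have hsb' := subCtx_size hΔb
      rw [hs1] at hΔ₂ hT₂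
      rw [hs1'] at hT₂
      rw [hsb] at hΔ₃ hT₃
      rw [hsb'] at hT₃
      rw [show k' + q' + Ctx.size Γ = k' + Ctx.size Γ + q' from by omega] at hΔb
      rw [show k' + q' + Ctx.size Γ + Ctx.size Δ
            = k' + Ctx.size Γ + Ctx.size Δ + q' from by omega] at hTb
      rw [ihΓ ht hΓ₂ hΓb hΓ₃, ihΔ ht hΔ₂ hΔb hΔ₃, exchangeTy ht hT hT₂ hTb hT₃]

/-- **Exchange of substitutions**:
`e[𝐭/γ₃][𝐮/γ₂] = e[𝐮/γ₂][𝐭[𝐮/γ₂]/γ₃]` for `𝐮 ∈ Sp γ₁ γ₂`,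
`𝐭 ∈ Sp γ₁.γ₂ γ₃` and `e ∈ Expr γ₁.γ₂.γ₃.γ₄` (stated for all four kinds of
expressions). -/
theorem subst_exchange (γ₂ γ₃ γ₄ : Scope) (u t t' : Sp)
    (ht' : SubSp 0 γ₂.len u t t') :
    (∀ (e a a' b b' : Tm),
      SubTm γ₄.len γ₃.len t e a → SubTm γ₄.len γ₂.len u a a' →
      SubTm (γ₃.len + γ₄.len) γ₂.len u e b → SubTm γ₄.len γ₃.len t' b b' →
      a' = b') ∧
    (∀ (e a a' b b' : Sp),
      SubSp γ₄.len γ₃.len t e a → SubSp γ₄.len γ₂.len u a a' →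
      SubSp (γ₃.len + γ₄.len) γ₂.len u e b → SubSp γ₄.len γ₃.len t' b b' →
      a' = b') ∧
    (∀ (e a a' b b' : Ty),
      SubTy γ₄.len γ₃.len t e a → SubTy γ₄.len γ₂.len u a a' →
      SubTy (γ₃.len + γ₄.len) γ₂.len u e b → SubTy γ₄.len γ₃.len t' b b' →
      a' = b') ∧
    (∀ (e a a' b b' : Ctx),
      SubCtx γ₄.len γ₃.len t e a → SubCtx γ₄.len γ₂.len u a a' →
      SubCtx (γ₃.len + γ₄.len) γ₂.len u e b → SubCtx γ₄.len γ₃.len t' b b' →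
      a' = b') := by
  have hk : γ₃.len + γ₄.len = γ₄.len + γ₃.len := Nat.add_comm _ _
  refine ⟨?_, ?_, ?_, ?_⟩
  · intro e a a' b b' A1 A2 B1 B2
    rw [hk] at B1
    exact exchangeTm ht' A1 A2 B1 B2
  · intro e a a' b b' A1 A2 B1 B2
    rw [hk] at B1
    exact exchangeSp ht' A1 A2 B1 B2
  · intro e a a' b b' A1 A2 B1 B2
    rw [hk] at B1
    exact exchangeTy ht' A1 A2 B1 B2
  · intro e a a' b b' A1 A2 B1 B2
    rw [hk] at B1
    exact exchangeCtx A1 ht' A2 B1 B2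

end CompLF
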